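/- Let λ > 0 and let v : ℝ → ℝ be continuously differentiable, odd (v(-x) = -v(x)), with v and v' square-integrable. Then ∫_ℝ v'(x)² dx - (2/λ²) ∫_ℝ sech²(x/λ) v(x)² dx ≥ 0. -/

import Mathlib

open MeasureTheory Real Set Filter Topology

lemma even_int_aux {f : ℝ → ℝ} (hf : ∀ x, f (-x) = f x) :
    ∫ x : ℝ, f x = 2 * ∫ x in Ioi (0:ℝ), f x := by
  rw [← integral_comp_abs (f := f)]
  congr 1; funext x
  rcases le_or_gt 0 x with h | h
  · rw [abs_of_nonneg h]
  · rw [abs_of_neg h, hf]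

lemma sinh_tendsto_atTop_aux : Tendsto Real.sinh atTop atTop := by
  apply tendsto_atTop_mono' _ _ tendsto_id
  filter_upwards [eventually_gt_atTop (0:ℝ)] with x hx
  exact (Real.self_lt_sinh_iff.mpr hx).le

lemma key_hasDeriv_aux (lam : ℝ) (hlam : 0 < lam) (v : ℝ → ℝ)
    (hdv : ∀ x, HasDerivAt v (deriv v x) x) {x : ℝ} (hx : 0 < x) :
    HasDerivAt (fun y => 2 / (lam * Real.sinh (2 * y / lam)) * v y ^ 2)
      ((((deriv v x) ^ 2 - 2 / lam ^ 2 * ((1 / Real.cosh (x / lam)) ^ 2 * v x ^ 2))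
        - (deriv v x - 2 / (lam * Real.sinh (2 * x / lam)) * v x) ^ 2)) x := by
  have hlam0 : lam ≠ 0 := hlam.ne'
  have hs : 0 < Real.sinh (2 * x / lam) := by
    rw [Real.sinh_pos_iff]; positivity
  have hd : lam * Real.sinh (2 * x / lam) ≠ 0 := by positivity
  have h1 : HasDerivAt (fun y : ℝ => 2 * y / lam) (2 / lam) x := by
    simpa using ((hasDerivAt_id x).const_mul 2).div_const lam
  have h2 : HasDerivAt (fun y => Real.sinh (2 * y / lam))
      (Real.cosh (2 * x / lam) * (2 / lam)) x := (Real.hasDerivAt_sinh _).comp x h1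
  have h3 : HasDerivAt (fun y => lam * Real.sinh (2 * y / lam))
      (lam * (Real.cosh (2 * x / lam) * (2 / lam))) x := h2.const_mul lam
  have h4 : HasDerivAt (fun y => 2 / (lam * Real.sinh (2 * y / lam)))
      ((0 * (lam * Real.sinh (2 * x / lam)) - 2 * (lam * (Real.cosh (2 * x / lam) * (2 / lam))))
        / (lam * Real.sinh (2 * x / lam)) ^ 2) x :=
    (hasDerivAt_const x 2).div h3 hd
  have h5 : HasDerivAt (fun y => v y ^ 2) (2 * v x ^ 1 * deriv v x) x := (hdv x).pow 2
  have h6 := h4.mul h5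
  refine HasDerivAt.congr_deriv h6 ?_
  symm
  have e1 : Real.sinh (2 * x / lam) = 2 * Real.sinh (x / lam) * Real.cosh (x / lam) := by
    rw [show 2 * x / lam = 2 * (x / lam) by ring, Real.sinh_two_mul]
  have e2 : Real.cosh (2 * x / lam) = 2 * Real.cosh (x / lam) ^ 2 - 1 := by
    rw [show 2 * x / lam = 2 * (x / lam) by ring, Real.cosh_two_mul, Real.cosh_sq]
    ring
  have e3 : Real.cosh (x / lam) ^ 2 = Real.sinh (x / lam) ^ 2 + 1 := Real.cosh_sq _
  have hsp : 0 < Real.sinh (x / lam) := by rw [Real.sinh_pos_iff]; positivity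
  have hcp : 0 < Real.cosh (x / lam) := Real.cosh_pos _
  rw [e1, e2]
  field_simp
  linear_combination (4 * v x ^ 2) * e3

/-- Spectral inequality: the operator −d²/dx² − (2/λ²)sech²(x/λ) is nonnegative
on odd functions. -/
theorem spectral_inequality_odd
    (lam : ℝ) (hlam : 0 < lam)
    (v : ℝ → ℝ) (hv : ContDiff ℝ 1 v)
    (hodd : ∀ x : ℝ, v (-x) = - v x)
    (hv2 : Integrable (fun x : ℝ => (v x) ^ 2))
    (hv'2 : Integrable (fun x : ℝ => (deriv v x) ^ 2)) :
    0 ≤ (∫ x : ℝ, (deriv v x) ^ 2)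
      - (2 / lam ^ 2) * ∫ x : ℝ, (1 / Real.cosh (x / lam)) ^ 2 * (v x) ^ 2 := by
  have hlam0 : lam ≠ 0 := hlam.ne'
  have hvc : Continuous v := hv.continuous
  have hv'c : Continuous (deriv v) := hv.continuous_deriv le_rfl
  have hdv : ∀ x, HasDerivAt v (deriv v x) x := fun x =>
    ((hv.differentiable one_ne_zero) x).hasDerivAt
  have hv0 : v 0 = 0 := by have := hodd 0; rw [neg_zero] at this; linarith
  -- v' is even
  have hv'even : ∀ x, deriv v (-x) = deriv v x := by
    intro x
    have h1 : HasDerivAt (fun y : ℝ => v (-y)) (deriv v (-x) * (-1)) x :=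
      (hdv (-x)).comp x (hasDerivAt_neg x)
    have h2 : HasDerivAt (fun y : ℝ => -v y) (deriv v (-x) * (-1)) x := by
      apply h1.congr_of_eventuallyEq
      filter_upwards with y using (hodd y).symm
    have h3 : HasDerivAt (fun y : ℝ => -v y) (-(deriv v x)) x := (hdv x).neg
    have := h2.unique h3
    linarith
  -- abbreviations
  set g : ℝ → ℝ := fun x => 2 / (lam * Real.sinh (2 * x / lam)) with hgdef
  set D : ℝ → ℝ := fun x => (deriv v x) ^ 2
      - 2 / lam ^ 2 * ((1 / Real.cosh (x / lam)) ^ 2 * v x ^ 2) with hDdef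
  -- integrability of the potential term
  have hsechc : Continuous (fun x : ℝ => (1 / Real.cosh (x / lam)) ^ 2 * v x ^ 2) := by
    apply Continuous.mul _ (hvc.pow 2)
    exact ((continuous_const.div (Real.continuous_cosh.comp (continuous_id.div_const lam))
      (fun x => (Real.cosh_pos _).ne')).pow 2)
  have hsech2 : Integrable (fun x : ℝ => (1 / Real.cosh (x / lam)) ^ 2 * v x ^ 2) := by
    apply hv2.mono' hsechc.aestronglyMeasurable
    filter_upwards with x
    have h1 : 1 ≤ Real.cosh (x / lam) := Real.one_le_cosh _
    have h2 : 0 < Real.cosh (x / lam) := Real.cosh_pos _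
    have h3 : (1 / Real.cosh (x / lam)) ^ 2 ≤ 1 := by
      rw [div_pow, one_pow]
      rw [div_le_one (by positivity)]
      nlinarith
    rw [Real.norm_eq_abs, abs_of_nonneg (by positivity)]
    nlinarith [sq_nonneg (v x)]
  have hDcont : Continuous D := by
    apply Continuous.sub (hv'c.pow 2) (continuous_const.mul hsechc)
  have hDint : Integrable D := hv'2.sub (hsech2.const_mul _)
  -- Step A : reduce to the half line
  have hA1 : ∫ x : ℝ, (deriv v x) ^ 2 = 2 * ∫ x in Ioi (0:ℝ), (deriv v x) ^ 2 :=
    even_int_aux (fun x => by rw [hv'even])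
  have hA2 : ∫ x : ℝ, (1 / Real.cosh (x / lam)) ^ 2 * v x ^ 2
      = 2 * ∫ x in Ioi (0:ℝ), (1 / Real.cosh (x / lam)) ^ 2 * v x ^ 2 := by
    apply even_int_aux
    intro x
    rw [hodd, neg_div, Real.cosh_neg]
    ring
  -- W = (v' - g v)^2 is the nonnegative square
  -- fundamental inequality on compact intervals
  have hF_fund : ∀ a b : ℝ, 0 < a → a ≤ b →
      g b * v b ^ 2 - g a * v a ^ 2 ≤ ∫ x in a..b, D x := by
    intro a b ha hab
    have huIcc : uIcc a b ⊆ Ioi (0:ℝ) := by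
      rw [uIcc_of_le hab]
      intro y hy
      exact lt_of_lt_of_le ha hy.1
    have hden : Continuous (fun y : ℝ => lam * Real.sinh (2 * y / lam)) := by fun_prop
    have hdenne : ∀ y ∈ uIcc a b, lam * Real.sinh (2 * y / lam) ≠ 0 := by
      intro y hy
      have hy' : 0 < y := huIcc hy
      have : 0 < Real.sinh (2 * y / lam) := by rw [Real.sinh_pos_iff]; positivity
      positivity
    have hgcont : ContinuousOn g (uIcc a b) :=
      continuousOn_const.div hden.continuousOn hdenne
    have hWcont : ContinuousOn (fun x => (deriv v x - g x * v x) ^ 2) (uIcc a b) :=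
      (hv'c.continuousOn.sub (hgcont.mul hvc.continuousOn)).pow 2
    have hWint : IntervalIntegrable (fun x => (deriv v x - g x * v x) ^ 2) volume a b :=
      hWcont.intervalIntegrable
    have hDint' : IntervalIntegrable D volume a b := hDcont.intervalIntegrable a b
    have hderiv : ∀ x ∈ uIcc a b, HasDerivAt (fun y => g y * v y ^ 2)
        (D x - (deriv v x - g x * v x) ^ 2) x := by
      intro x hx
      exact key_hasDeriv_aux lam hlam v hdv (huIcc hx)
    have hFTC := intervalIntegral.integral_eq_sub_of_hasDerivAt hderiv (hDint'.sub hWint)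
    rw [intervalIntegral.integral_sub hDint' hWint] at hFTC
    have hWnn : 0 ≤ ∫ x in a..b, (deriv v x - g x * v x) ^ 2 :=
      intervalIntegral.integral_nonneg hab (fun u _ => sq_nonneg _)
    linarith
  -- limit of the boundary term at +infinity
  have hgtend : Tendsto g atTop (𝓝 0) := by
    apply Filter.Tendsto.div_atTop tendsto_const_nhds
    apply Filter.Tendsto.const_mul_atTop hlam
    apply sinh_tendsto_atTop_aux.comp
    exact Filter.Tendsto.atTop_div_const hlam
      (Filter.Tendsto.const_mul_atTop two_pos tendsto_id)
  have hvv' : Integrable (fun x : ℝ => 2 * v x * deriv v x) := by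
    apply (hv2.add hv'2).mono'
      ((by fun_prop : Continuous fun x : ℝ => 2 * v x * deriv v x).aestronglyMeasurable)
    filter_upwards with x
    rw [Real.norm_eq_abs]
    calc |2 * v x * deriv v x| = 2 * (|v x| * |deriv v x|) := by
          rw [abs_mul, abs_mul, abs_two]; ring
      _ ≤ v x ^ 2 + deriv v x ^ 2 := by
          nlinarith [sq_nonneg (|v x| - |deriv v x|), sq_abs (v x), sq_abs (deriv v x)]
  have hvsq_lim : Tendsto (fun b => v b ^ 2) atTop
      (𝓝 (∫ x in Ioi (0:ℝ), 2 * v x * deriv v x)) := by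
    have h1 := intervalIntegral_tendsto_integral_Ioi 0 hvv'.integrableOn tendsto_id
    apply h1.congr
    intro b
    simp only [id_eq]
    rw [intervalIntegral.integral_eq_sub_of_hasDerivAt (f := fun y => v y ^ 2)
      (fun x _ => by
        have h : HasDerivAt (fun y => v y ^ 2) (2 * v x ^ 1 * deriv v x) x := (hdv x).pow 2
        exact h.congr_deriv (by ring))
      ((by fun_prop : Continuous fun x : ℝ => 2 * v x * deriv v x).intervalIntegrable 0 b)]
    simp [hv0]
  have hFtop : Tendsto (fun b => g b * v b ^ 2) atTop (𝓝 0) := by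
    simpa using hgtend.mul hvsq_lim
  -- limit of the boundary term at 0+
  have hslope : Tendsto (fun a => v a / a) (𝓝[>] (0:ℝ)) (𝓝 (deriv v 0)) := by
    have h := hasDerivAt_iff_tendsto_slope.mp (hdv 0)
    have hsub : 𝓝[>] (0:ℝ) ≤ 𝓝[≠] (0:ℝ) :=
      nhdsWithin_mono 0 (fun y hy => by simpa using ne_of_gt hy)
    exact (h.mono_left hsub).congr (fun a => by simp [slope_def_field, hv0])
  have hsinh1 : Tendsto (fun u : ℝ => u / Real.sinh u) (𝓝[≠] (0:ℝ)) (𝓝 1) := by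
    have h := hasDerivAt_iff_tendsto_slope.mp (Real.hasDerivAt_sinh 0)
    rw [Real.cosh_zero] at h
    have h2 : Tendsto (fun u : ℝ => Real.sinh u / u) (𝓝[≠] (0:ℝ)) (𝓝 1) :=
      h.congr (fun u => by simp [slope_def_field])
    have h3 := h2.inv₀ one_ne_zero
    rw [inv_one] at h3
    exact h3.congr (fun u => by rw [inv_div])
  have hmap : Tendsto (fun a : ℝ => 2 * a / lam) (𝓝[>] (0:ℝ)) (𝓝[≠] (0:ℝ)) := by
    apply tendsto_nhdsWithin_of_tendsto_nhds_of_eventually_within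
    · have h : Tendsto (fun a : ℝ => 2 * a / lam) (𝓝 0) (𝓝 (2 * 0 / lam)) :=
        ((continuous_const.mul continuous_id).div_const lam).tendsto 0
      simpa using h.mono_left nhdsWithin_le_nhds
    · filter_upwards [self_mem_nhdsWithin] with a (ha : (0:ℝ) < a)
      simp only [mem_compl_iff, mem_singleton_iff]
      positivity
  have hcomp : Tendsto (fun a : ℝ => (2 * a / lam) / Real.sinh (2 * a / lam))
      (𝓝[>] (0:ℝ)) (𝓝 1) := hsinh1.comp hmap
  have haz : Tendsto (fun a : ℝ => a) (𝓝[>] (0:ℝ)) (𝓝 0) :=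
    tendsto_id.mono_left nhdsWithin_le_nhds
  have hFzero : Tendsto (fun a => g a * v a ^ 2) (𝓝[>] (0:ℝ)) (𝓝 0) := by
    have h := (haz.mul hcomp).mul (hslope.pow 2)
    rw [show ((0:ℝ) * 1) * (deriv v 0) ^ 2 = 0 by ring] at h
    apply h.congr'
    filter_upwards [self_mem_nhdsWithin] with a (ha : (0:ℝ) < a)
    have hane : a ≠ 0 := ha.ne'
    have hS : Real.sinh (2 * a / lam) ≠ 0 := by
      have : 0 < Real.sinh (2 * a / lam) := by rw [Real.sinh_pos_iff]; positivity
      positivity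
    simp only [hgdef]
    field_simp
  -- tail inequality
  have hB3 : ∀ a : ℝ, 0 < a → -(g a * v a ^ 2) ≤ ∫ x in Ioi a, D x := by
    intro a ha
    have h1 := intervalIntegral_tendsto_integral_Ioi a hDint.integrableOn tendsto_id
    have h2 : ∀ᶠ b in atTop, g b * v b ^ 2 - g a * v a ^ 2 ≤ ∫ x in a..b, D x := by
      filter_upwards [eventually_ge_atTop a] with b hb
      exact hF_fund a b ha hb
    have h3 := le_of_tendsto_of_tendsto (hFtop.sub_const (g a * v a ^ 2)) h1 h2
    simpa using h3
  -- splitting the integral over (0, infinity)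
  have hsplit : ∀ a : ℝ, 0 < a → ∫ x in Ioi (0:ℝ), D x
      = (∫ x in Ioc (0:ℝ) a, D x) + ∫ x in Ioi a, D x := by
    intro a ha
    rw [← setIntegral_union (Ioc_disjoint_Ioi le_rfl) measurableSet_Ioi
      hDint.integrableOn hDint.integrableOn, Ioc_union_Ioi_eq_Ioi ha.le]
  obtain ⟨C, hC⟩ := (isCompact_Icc (a := (0:ℝ)) (b := 1)).exists_bound_of_continuousOn
    hDcont.continuousOn
  have hsmall : Tendsto (fun a => ∫ x in Ioc (0:ℝ) a, D x) (𝓝[>] (0:ℝ)) (𝓝 0) := by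
    apply squeeze_zero_norm' (a := fun a => C * a)
    · filter_upwards [Ioo_mem_nhdsGT_of_mem (Set.mem_Ico.mpr ⟨le_rfl, one_pos⟩)] with a ha
      have h1 : (volume (Ioc (0:ℝ) a)).toReal = a := by
        simp [Real.volume_Ioc, ha.1.le]
      calc ‖∫ x in Ioc (0:ℝ) a, D x‖ ≤ C * (volume (Ioc (0:ℝ) a)).toReal := by
            apply norm_setIntegral_le_of_norm_le_const
            · rw [Real.volume_Ioc]; exact ENNReal.ofReal_lt_top
            · intro x hx
              exact hC x ⟨hx.1.le, hx.2.trans ha.2.le⟩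
        _ = C * a := by rw [h1]
    · have h : Tendsto (fun a : ℝ => C * a) (𝓝 (0:ℝ)) (𝓝 (C * 0)) :=
        (continuous_const.mul continuous_id).tendsto 0
      simpa using h.mono_left nhdsWithin_le_nhds
  have htail : Tendsto (fun a => ∫ x in Ioi a, D x) (𝓝[>] (0:ℝ))
      (𝓝 (∫ x in Ioi (0:ℝ), D x)) := by
    have h := (tendsto_const_nhds (x := ∫ x in Ioi (0:ℝ), D x)
      (f := 𝓝[>] (0:ℝ))).sub hsmall
    rw [sub_zero] at h
    apply h.congr'
    filter_upwards [self_mem_nhdsWithin] with a (ha : (0:ℝ) < a)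
    rw [hsplit a ha]; ring
  have hB4 : 0 ≤ ∫ x in Ioi (0:ℝ), D x := by
    have hev : ∀ᶠ a in 𝓝[>] (0:ℝ), -(g a * v a ^ 2) ≤ ∫ x in Ioi a, D x := by
      filter_upwards [self_mem_nhdsWithin] with a (ha : (0:ℝ) < a) using hB3 a ha
    have := le_of_tendsto_of_tendsto hFzero.neg htail hev
    simpa using this
  -- assemble
  have hIoD : ∫ x in Ioi (0:ℝ), D x
      = (∫ x in Ioi (0:ℝ), (deriv v x) ^ 2)
        - 2 / lam ^ 2 * ∫ x in Ioi (0:ℝ), (1 / Real.cosh (x / lam)) ^ 2 * v x ^ 2 := by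
    simp only [hDdef]
    rw [integral_sub hv'2.integrableOn ((hsech2.const_mul _).integrableOn),
      integral_const_mul]
  rw [hA1, hA2]
  rw [hIoD] at hB4
  linarith
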